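/- Let K ⊆ ℝⁿ be a nonempty set, let x ∈ ℝⁿ with dist_K(x) > 0 have a projection p onto K, let η > 0, ν ≥ 1, and let σ > 0 satisfy (1/ν)·dist_K(x) ≤ √n·σ ≤ ν·dist_K(x). If ε ∈ ℝⁿ satisfies ‖ε − √n·(x − p)/dist_K(x)‖ ≤ η, then ‖σ·ε − (x − p)‖ ≤ η̂·dist_K(x), where η̂ = (η·ν)/√n + max(ν − 1, 1 − 1/ν). -/

import Mathlib

/-- If the denoiser output `ε` is within `η` of the scaled unit gradient
`√n·(x − p)/dist_K(x)` and `√n·σ` is a `ν`-accurate estimate of `dist_K(x)`, then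
`σ·ε` approximates the gradient `x − p` of `½·dist_K²` with relative error
`η̂ = ην/√n + max(ν − 1, 1 − 1/ν)`. -/
theorem stmt_14 {n : ℕ} (K : Set (EuclideanSpace ℝ (Fin n))) (hK : K.Nonempty)
    (x p : EuclideanSpace ℝ (Fin n)) (hpK : p ∈ K)
    (hp : dist x p = Metric.infDist x K)
    (hd : 0 < Metric.infDist x K)
    (η ν σ : ℝ) (hη : 0 < η) (hν : 1 ≤ ν) (hσ : 0 < σ)
    (hσ₁ : (1 / ν) * Metric.infDist x K ≤ Real.sqrt n * σ)
    (hσ₂ : Real.sqrt n * σ ≤ ν * Metric.infDist x K)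
    (ε : EuclideanSpace ℝ (Fin n))
    (hε : ‖ε - (Real.sqrt n / Metric.infDist x K) • (x - p)‖ ≤ η) :
    ‖σ • ε - (x - p)‖
      ≤ (η * ν / Real.sqrt n + max (ν - 1) (1 - 1 / ν)) * Metric.infDist x K := by
  set d := Metric.infDist x K with hdd
  set s := Real.sqrt n with hss
  have hν0 : 0 < ν := lt_of_lt_of_le one_pos hν
  have hs : 0 < s := by
    rcases lt_or_ge 0 s with h | h
    · exact h
    · exfalso
      have h1 : 0 < (1 / ν) * d := by positivity
      nlinarith [mul_nonpos_of_nonpos_of_nonneg h hσ.le]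
  have hnorm : ‖x - p‖ = d := by rw [← dist_eq_norm]; exact hp
  have key : σ • ε - (x - p)
      = σ • (ε - (s / d) • (x - p)) + (σ * s / d - 1) • (x - p) := by
    match_scalars <;> field_simp <;> ring
  have h1 : |σ * s / d - 1| ≤ max (ν - 1) (1 - 1 / ν) := by
    rw [abs_le]
    constructor
    · have : 1 / ν - 1 ≤ σ * s / d - 1 := by
        have : 1 / ν ≤ σ * s / d := by
          rw [le_div_iff₀ hd]; nlinarith
        linarith
      have h2 : -(1 - 1 / ν) ≤ σ * s / d - 1 := by linarith
      exact le_trans (neg_le_neg (le_max_right _ _)) h2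
    · have : σ * s / d ≤ ν := by
        rw [div_le_iff₀ hd]; nlinarith
      exact le_trans (by linarith) (le_max_left (ν - 1) (1 - 1 / ν))
  have h2 : σ ≤ ν * d / s := by
    rw [le_div_iff₀ hs]; nlinarith
  calc ‖σ • ε - (x - p)‖
      = ‖σ • (ε - (s / d) • (x - p)) + (σ * s / d - 1) • (x - p)‖ := by rw [key]
    _ ≤ ‖σ • (ε - (s / d) • (x - p))‖ + ‖(σ * s / d - 1) • (x - p)‖ := norm_add_le _ _
    _ = σ * ‖ε - (s / d) • (x - p)‖ + |σ * s / d - 1| * d := by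
        rw [norm_smul, norm_smul, hnorm, Real.norm_eq_abs, Real.norm_eq_abs,
          abs_of_pos hσ]
    _ ≤ (ν * d / s) * η + max (ν - 1) (1 - 1 / ν) * d := by
        gcongr
    _ = (η * ν / s + max (ν - 1) (1 - 1 / ν)) * d := by field_simp
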